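/- Let N ≥ 3 and let u₀, u₁ : ℝ^N → ℂ be integrable with ∫_{ℝ^N} |ŵ₀(ξ)|² dξ < ∞ and ∫_{ℝ^N} |ŵ₁(ξ)|² dξ < ∞. Let û(ξ,t) be the explicit Fourier-space solution with data ŵ₀(ξ), ŵ₁(ξ). Then there exist C > 0 depending only on N and T > 0 such that for all t ≥ T: ∫_{ℝ^N} |û(ξ,t)|² dξ ≤ C ( ∫_{ℝ^N}|ŵ₀(ξ)|² dξ + ∫_{ℝ^N}|ŵ₁(ξ)|² dξ + ‖u₀‖_{L¹}² + ‖u₁‖_{L¹}² ) t^{-N/2}. -/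

import Mathlib

open MeasureTheory

/-- Non-normalized Fourier transform `ŵ(ξ) = ∫ u(x) e^{-i⟨x,ξ⟩} dx`. -/
noncomputable def ft {N : ℕ} (u : EuclideanSpace ℝ (Fin N) → ℂ)
    (ξ : EuclideanSpace ℝ (Fin N)) : ℂ :=
  ∫ x, u x * Complex.exp (-Complex.I * ((inner ℝ x ξ : ℝ) : ℂ))

/-- The explicit Fourier-space solution with data `w₀ ξ`, `w₁ ξ`. -/
noncomputable def uhat {N : ℕ} (w₀ w₁ : EuclideanSpace ℝ (Fin N) → ℂ)
    (ξ : EuclideanSpace ℝ (Fin N)) (t : ℝ) : ℂ :=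
  (Real.exp (-(t * Real.log (1 + ‖ξ‖ ^ 2)) / 2) : ℂ)
    * ((Real.cos (Real.pi * t / 4)
        + (2 * Real.log (1 + ‖ξ‖ ^ 2) / Real.pi) * Real.sin (Real.pi * t / 4) : ℝ) : ℂ)
    * w₀ ξ
  + (Real.exp (-(t * Real.log (1 + ‖ξ‖ ^ 2)) / 2) : ℂ) * ((4 / Real.pi : ℝ) : ℂ)
    * (Real.sin (Real.pi * t / 4) : ℂ) * w₁ ξ

/-! ### Auxiliary lemmas -/

/-- Convexity of `exp`: `log 2 * s ≤ log (1 + s)` for `s ∈ [0,1]`. -/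
lemma aux_log_one_add_ge {s : ℝ} (h0 : 0 ≤ s) (h1 : s ≤ 1) :
    Real.log 2 * s ≤ Real.log (1 + s) := by
  rw [Real.le_log_iff_exp_le (by linarith)]
  have h := convexOn_exp.2 (Set.mem_univ (Real.log 2)) (Set.mem_univ (0:ℝ))
    h0 (by linarith : (0:ℝ) ≤ 1 - s) (by ring)
  simp only [smul_eq_mul, mul_zero, add_zero, Real.exp_log two_pos, Real.exp_zero, mul_one] at h
  rw [mul_comm]
  linarith

/-- Real Gaussian integrability on Euclidean space. -/
lemma aux_integrable_gauss {N : ℕ} {b : ℝ} (hb : 0 < b) :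
    Integrable (fun v : EuclideanSpace ℝ (Fin N) => Real.exp (-b * ‖v‖ ^ 2)) := by
  have h := GaussianFourier.integrable_cexp_neg_mul_sq_norm_add
    (V := EuclideanSpace ℝ (Fin N)) (b := (b:ℂ)) (by simpa using hb) 0 0
  refine h.norm.congr (Filter.Eventually.of_forall fun v => ?_)
  simp only [Complex.norm_exp]
  norm_num
  left
  norm_cast

/-- The Fourier transform is bounded by the `L¹` norm. -/
lemma aux_norm_ft_le {N : ℕ} (u : EuclideanSpace ℝ (Fin N) → ℂ)
    (ξ : EuclideanSpace ℝ (Fin N)) : ‖ft u ξ‖ ≤ ∫ x, ‖u x‖ := by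
  rw [ft]
  refine le_trans (norm_integral_le_integral_norm _) (le_of_eq ?_)
  congr 1
  ext x
  rw [norm_mul]
  simp [Complex.norm_exp, Complex.mul_re]

set_option maxHeartbeats 1000000 in
/-- Pointwise bound on the Fourier-side solution, valid for all `t ≥ 2`. -/
lemma aux_pointwise_bound {N : ℕ} (w₀ w₁ : EuclideanSpace ℝ (Fin N) → ℂ)
    (M₀ M₁ : ℝ) (hM₀ : ∀ ξ, ‖w₀ ξ‖ ≤ M₀) (hM₁ : ∀ ξ, ‖w₁ ξ‖ ≤ M₁)
    (t : ℝ) (ht : 2 ≤ t) (ξ : EuclideanSpace ℝ (Fin N)) :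
    ‖uhat w₀ w₁ ξ t‖ ^ 2 ≤
      32 * Real.exp (-Real.log 2 * t) * (‖w₀ ξ‖ ^ 2 + ‖w₁ ξ‖ ^ 2)
      + 8 * (M₀ ^ 2 + M₁ ^ 2) * Real.exp (-(Real.log 2 * t) * ‖ξ‖ ^ 2) := by
  have hs : (0:ℝ) ≤ ‖ξ‖ ^ 2 := by positivity
  set a := Real.log (1 + ‖ξ‖ ^ 2) with ha_def
  have ha : 0 ≤ a := Real.log_nonneg (by linarith)
  set E := Real.exp (-(t * a) / 2) with hE_def
  have hE : 0 < E := Real.exp_pos _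
  have hpi : (2:ℝ) ≤ Real.pi := by linarith [Real.pi_gt_three]
  have hM0 : 0 ≤ M₀ := le_trans (norm_nonneg _) (hM₀ ξ)
  have hM1 : 0 ≤ M₁ := le_trans (norm_nonneg _) (hM₁ ξ)
  have hc : (0:ℝ) < Real.log 2 := Real.log_pos one_lt_two
  -- absolute value bounds for the trigonometric coefficients
  have habs : |Real.cos (Real.pi * t / 4) + 2 * a / Real.pi * Real.sin (Real.pi * t / 4)|
      ≤ 1 + a := by
    refine le_trans (abs_add_le _ _) ?_
    have h1 := Real.abs_cos_le_one (Real.pi * t / 4)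
    have h2 := Real.abs_sin_le_one (Real.pi * t / 4)
    rw [abs_mul, abs_of_nonneg (show (0:ℝ) ≤ 2 * a / Real.pi by positivity)]
    have h4 : 2 * a / Real.pi ≤ a := by
      rw [div_le_iff₀ (by positivity)]
      nlinarith
    nlinarith [abs_nonneg (Real.sin (Real.pi * t / 4))]
  have habs2 : |4 / Real.pi| * |Real.sin (Real.pi * t / 4)| ≤ 2 := by
    have h2 := Real.abs_sin_le_one (Real.pi * t / 4)
    rw [abs_of_nonneg (show (0:ℝ) ≤ 4 / Real.pi by positivity)]
    have h4 : 4 / Real.pi ≤ 2 := by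
      rw [div_le_iff₀ (by positivity)]
      nlinarith
    nlinarith [abs_nonneg (Real.sin (Real.pi * t / 4))]
  -- step 1 : norm bound
  have h1 : ‖uhat w₀ w₁ ξ t‖ ≤ E * (1 + a) * ‖w₀ ξ‖ + 2 * E * ‖w₁ ξ‖ := by
    rw [uhat]
    refine le_trans (norm_add_le _ _) (add_le_add ?_ ?_)
    · rw [norm_mul, norm_mul, Complex.norm_real, Complex.norm_real, Real.norm_eq_abs,
        Real.norm_eq_abs, abs_of_pos hE]
      gcongr
    · rw [norm_mul, norm_mul, norm_mul, Complex.norm_real, Complex.norm_real,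
        Complex.norm_real, Real.norm_eq_abs, Real.norm_eq_abs, Real.norm_eq_abs,
        abs_of_pos hE]
      nlinarith [mul_le_mul_of_nonneg_left
        (mul_le_mul_of_nonneg_right habs2 (norm_nonneg (w₁ ξ))) hE.le]
  -- step 2 : squared bound
  have h2 : ‖uhat w₀ w₁ ξ t‖ ^ 2
      ≤ 2 * E ^ 2 * (1 + a) ^ 2 * ‖w₀ ξ‖ ^ 2 + 8 * E ^ 2 * ‖w₁ ξ‖ ^ 2 := by
    nlinarith [norm_nonneg (uhat w₀ w₁ ξ t), norm_nonneg (w₀ ξ), norm_nonneg (w₁ ξ),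
      sq_nonneg (E * (1 + a) * ‖w₀ ξ‖ - 2 * E * ‖w₁ ξ‖), hE.le, ha]
  have hE2 : E ^ 2 = Real.exp (-(t * a)) := by
    rw [sq, ← Real.exp_add]; ring_nf
  have hw0 : ‖w₀ ξ‖ ^ 2 ≤ M₀ ^ 2 := pow_le_pow_left₀ (norm_nonneg _) (hM₀ ξ) 2
  have hw1 : ‖w₁ ξ‖ ^ 2 ≤ M₁ ^ 2 := pow_le_pow_left₀ (norm_nonneg _) (hM₁ ξ) 2
  by_cases hξ : ‖ξ‖ ^ 2 ≤ 1
  · -- low frequency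
    have hac : Real.log 2 * ‖ξ‖ ^ 2 ≤ a := aux_log_one_add_ge hs hξ
    have ha1 : a ≤ 1 := by
      have h5 : a ≤ Real.log 2 := Real.log_le_log (by linarith) (by linarith)
      have h6 := Real.log_le_sub_one_of_pos (show (0:ℝ) < 2 by norm_num)
      linarith
    have hEb : E ^ 2 ≤ Real.exp (-(Real.log 2 * t) * ‖ξ‖ ^ 2) := by
      rw [hE2]
      apply Real.exp_le_exp.2
      nlinarith [mul_le_mul_of_nonneg_left hac (show (0:ℝ) ≤ t by linarith)]
    have hpos : (0:ℝ) ≤ 32 * Real.exp (-Real.log 2 * t) * (‖w₀ ξ‖ ^ 2 + ‖w₁ ξ‖ ^ 2) := by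
      positivity
    have h4a : (1 + a) ^ 2 ≤ 4 := by nlinarith
    have A0 : E ^ 2 * ‖w₀ ξ‖ ^ 2 ≤ Real.exp (-(Real.log 2 * t) * ‖ξ‖ ^ 2) * M₀ ^ 2 :=
      mul_le_mul hEb hw0 (sq_nonneg _) (Real.exp_pos _).le
    have A1 : E ^ 2 * ‖w₁ ξ‖ ^ 2 ≤ Real.exp (-(Real.log 2 * t) * ‖ξ‖ ^ 2) * M₁ ^ 2 :=
      mul_le_mul hEb hw1 (sq_nonneg _) (Real.exp_pos _).le
    have B0 : (1 + a) ^ 2 * (E ^ 2 * ‖w₀ ξ‖ ^ 2)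
        ≤ 4 * (Real.exp (-(Real.log 2 * t) * ‖ξ‖ ^ 2) * M₀ ^ 2) :=
      mul_le_mul h4a A0 (by positivity) (by norm_num)
    linarith
  · -- high frequency
    push_neg at hξ
    have hac : Real.log 2 ≤ a := by
      have := Real.log_le_log (show (0:ℝ) < 2 by norm_num) (by linarith : (2:ℝ) ≤ 1 + ‖ξ‖ ^ 2)
      linarith
    have h1a : 1 + a ≤ Real.exp a := by
      have := Real.add_one_le_exp a; linarith
    have key : E ^ 2 * (1 + a) ^ 2 ≤ 4 * Real.exp (-Real.log 2 * t) := by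
      rw [hE2]
      calc Real.exp (-(t * a)) * (1 + a) ^ 2
          ≤ Real.exp (-(t * a)) * Real.exp a ^ 2 := by
            gcongr
        _ = Real.exp (-(t * a) + (a + a)) := by
            rw [sq, ← Real.exp_add, ← Real.exp_add]
        _ ≤ Real.exp (-(Real.log 2 * t) + 2 * Real.log 2) := by
            apply Real.exp_le_exp.2
            linarith [mul_le_mul_of_nonneg_left hac (show (0:ℝ) ≤ t - 2 by linarith)]
        _ = 4 * Real.exp (-Real.log 2 * t) := by
            rw [Real.exp_add, two_mul, Real.exp_add, Real.exp_log two_pos]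
            ring
    have hE4 : E ^ 2 ≤ 4 * Real.exp (-Real.log 2 * t) := by
      have expand : E ^ 2 * (1 + a) ^ 2 = E ^ 2 + E ^ 2 * (2 * a + a ^ 2) := by ring
      have pos : (0:ℝ) ≤ E ^ 2 * (2 * a + a ^ 2) := by positivity
      linarith
    have hpos2 : (0:ℝ) ≤ 8 * (M₀ ^ 2 + M₁ ^ 2) * Real.exp (-(Real.log 2 * t) * ‖ξ‖ ^ 2) := by
      positivity
    have t1 := mul_le_mul_of_nonneg_right key (sq_nonneg (‖w₀ ξ‖))
    have t2 := mul_le_mul_of_nonneg_right hE4 (sq_nonneg (‖w₁ ξ‖))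
    have p1 : (0:ℝ) ≤ Real.exp (-Real.log 2 * t) * ‖w₀ ξ‖ ^ 2 := by positivity
    linarith

/-- Proposition 2.8: decay of the `L²`-norm of the solution
(Fourier-side squared form, via Plancherel). -/
theorem stmt_11 (N : ℕ) (hN : 3 ≤ N)
    (u₀ u₁ : EuclideanSpace ℝ (Fin N) → ℂ)
    (h₀ : Integrable u₀) (h₁ : Integrable u₁)
    (hw₀ : Integrable (fun ξ : EuclideanSpace ℝ (Fin N) => ‖ft u₀ ξ‖ ^ 2))
    (hw₁ : Integrable (fun ξ : EuclideanSpace ℝ (Fin N) => ‖ft u₁ ξ‖ ^ 2)) :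
    ∃ C > (0 : ℝ), ∃ T > (0 : ℝ), ∀ t : ℝ, T ≤ t →
      (∫ ξ : EuclideanSpace ℝ (Fin N), ‖uhat (ft u₀) (ft u₁) ξ t‖ ^ 2)
      ≤ C * ((∫ ξ : EuclideanSpace ℝ (Fin N), ‖ft u₀ ξ‖ ^ 2)
              + (∫ ξ : EuclideanSpace ℝ (Fin N), ‖ft u₁ ξ‖ ^ 2)
              + (∫ x, ‖u₀ x‖) ^ 2 + (∫ x, ‖u₁ x‖) ^ 2) * t ^ (-(N : ℝ) / 2) := by
  classical
  set c := Real.log 2 with hc_def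
  have hc : (0:ℝ) < c := Real.log_pos one_lt_two
  set p := ((N:ℝ)) / 2 with hp_def
  have hNpos : (0:ℝ) < N := by exact_mod_cast lt_of_lt_of_le (by norm_num : 0 < 3) hN
  have hp : 0 < p := by positivity
  set M₀ := ∫ x, ‖u₀ x‖ with hM₀def
  set M₁ := ∫ x, ‖u₁ x‖ with hM₁def
  have hM₀ : ∀ ξ, ‖ft u₀ ξ‖ ≤ M₀ := fun ξ => aux_norm_ft_le u₀ ξ
  have hM₁ : ∀ ξ, ‖ft u₁ ξ‖ ≤ M₁ := fun ξ => aux_norm_ft_le u₁ ξ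
  set I₀ := ∫ ξ : EuclideanSpace ℝ (Fin N), ‖ft u₀ ξ‖ ^ 2 with hI₀def
  set I₁ := ∫ ξ : EuclideanSpace ℝ (Fin N), ‖ft u₁ ξ‖ ^ 2 with hI₁def
  have hI₀ : 0 ≤ I₀ := integral_nonneg fun ξ => by positivity
  have hI₁ : 0 ≤ I₁ := integral_nonneg fun ξ => by positivity
  have hM0 : 0 ≤ M₀ := le_trans (norm_nonneg _) (hM₀ 0)
  have hM1 : 0 ≤ M₁ := le_trans (norm_nonneg _) (hM₁ 0)
  -- threshold from exponential decay
  have htend := tendsto_rpow_mul_exp_neg_mul_atTop_nhds_zero p c hc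
  have hev : ∀ᶠ t in Filter.atTop, t ^ p * Real.exp (-c * t) ≤ 1/4 :=
    (htend.eventually_le_const (by norm_num : (0:ℝ) < 1/4))
  obtain ⟨T₀, hT₀⟩ := Filter.eventually_atTop.1 (hev.and (Filter.eventually_ge_atTop (2:ℝ)))
  refine ⟨8 + 8 * (Real.pi / c) ^ p, by positivity, max T₀ 2,
    lt_of_lt_of_le (by norm_num) (le_max_right T₀ 2), fun t ht => ?_⟩
  have ht2 : (2:ℝ) ≤ t := le_trans (le_max_right T₀ 2) ht
  have htpos : (0:ℝ) < t := by linarith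
  obtain ⟨hfb, -⟩ := hT₀ t (le_trans (le_max_left T₀ 2) ht)
  -- the dominating function
  have hdom : ∀ ξ, ‖uhat (ft u₀) (ft u₁) ξ t‖ ^ 2 ≤
      32 * Real.exp (-c * t) * (‖ft u₀ ξ‖ ^ 2 + ‖ft u₁ ξ‖ ^ 2)
      + 8 * (M₀ ^ 2 + M₁ ^ 2) * Real.exp (-(c * t) * ‖ξ‖ ^ 2) :=
    fun ξ => aux_pointwise_bound (ft u₀) (ft u₁) M₀ M₁ hM₀ hM₁ t ht2 ξ
  have hg1 : Integrable (fun ξ : EuclideanSpace ℝ (Fin N) =>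
      32 * Real.exp (-c * t) * (‖ft u₀ ξ‖ ^ 2 + ‖ft u₁ ξ‖ ^ 2)) :=
    (hw₀.add hw₁).const_mul _
  have hg2i : Integrable (fun ξ : EuclideanSpace ℝ (Fin N) =>
      Real.exp (-(c * t) * ‖ξ‖ ^ 2)) := aux_integrable_gauss (mul_pos hc htpos)
  have hg2 : Integrable (fun ξ : EuclideanSpace ℝ (Fin N) =>
      8 * (M₀ ^ 2 + M₁ ^ 2) * Real.exp (-(c * t) * ‖ξ‖ ^ 2)) := hg2i.const_mul _
  have hmono : (∫ ξ : EuclideanSpace ℝ (Fin N), ‖uhat (ft u₀) (ft u₁) ξ t‖ ^ 2)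
      ≤ ∫ ξ : EuclideanSpace ℝ (Fin N),
          (32 * Real.exp (-c * t) * (‖ft u₀ ξ‖ ^ 2 + ‖ft u₁ ξ‖ ^ 2)
           + 8 * (M₀ ^ 2 + M₁ ^ 2) * Real.exp (-(c * t) * ‖ξ‖ ^ 2)) :=
    integral_mono_of_nonneg (Filter.Eventually.of_forall fun ξ => by positivity)
      (hg1.add hg2) (Filter.Eventually.of_forall hdom)
  -- compute the integral of the dominating function
  have hgauss : (∫ ξ : EuclideanSpace ℝ (Fin N), Real.exp (-(c * t) * ‖ξ‖ ^ 2))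
      = (Real.pi / (c * t)) ^ p := by
    rw [GaussianFourier.integral_rexp_neg_mul_sq_norm (mul_pos hc htpos)]
    congr 1
    rw [finrank_euclideanSpace_fin]
  have hcalc : (∫ ξ : EuclideanSpace ℝ (Fin N),
      (32 * Real.exp (-c * t) * (‖ft u₀ ξ‖ ^ 2 + ‖ft u₁ ξ‖ ^ 2)
       + 8 * (M₀ ^ 2 + M₁ ^ 2) * Real.exp (-(c * t) * ‖ξ‖ ^ 2)))
      = 32 * Real.exp (-c * t) * (I₀ + I₁)
        + 8 * (M₀ ^ 2 + M₁ ^ 2) * (Real.pi / (c * t)) ^ p := by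
    rw [integral_add hg1 hg2, integral_const_mul, integral_const_mul, integral_add hw₀ hw₁,
      hgauss]
  -- rpow algebra
  have htp : (0:ℝ) < t ^ p := Real.rpow_pos_of_pos htpos p
  have hsplit : (Real.pi / (c * t)) ^ p = (Real.pi / c) ^ p * t ^ (-p) := by
    have h : Real.pi / (c * t) = (Real.pi / c) * t⁻¹ := by
      field_simp
    rw [h, Real.mul_rpow (by positivity) (by positivity), Real.inv_rpow htpos.le,
      Real.rpow_neg htpos.le]
  have hexp_le : Real.exp (-c * t) ≤ (1/4) * t ^ (-p) := by
    rw [Real.rpow_neg htpos.le]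
    have h := (le_div_iff₀ htp).2 (by linarith [hfb] : Real.exp (-c * t) * t ^ p ≤ 1/4)
    rw [div_eq_mul_inv] at h
    exact h
  have hpow : t ^ (-(N:ℝ)/2) = t ^ (-p) := by
    rw [hp_def, neg_div]
  have htneg : (0:ℝ) < t ^ (-p) := Real.rpow_pos_of_pos htpos _
  have hpicp : (0:ℝ) ≤ (Real.pi / c) ^ p := by positivity
  calc (∫ ξ : EuclideanSpace ℝ (Fin N), ‖uhat (ft u₀) (ft u₁) ξ t‖ ^ 2)
      ≤ 32 * Real.exp (-c * t) * (I₀ + I₁)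
        + 8 * (M₀ ^ 2 + M₁ ^ 2) * (Real.pi / (c * t)) ^ p := by
        rw [← hcalc]; exact hmono
    _ ≤ 32 * ((1/4) * t ^ (-p)) * (I₀ + I₁)
        + 8 * (M₀ ^ 2 + M₁ ^ 2) * ((Real.pi / c) ^ p * t ^ (-p)) := by
        rw [hsplit]
        have h32 : 32 * Real.exp (-c * t) * (I₀ + I₁)
            ≤ 32 * ((1/4) * t ^ (-p)) * (I₀ + I₁) := by
          apply mul_le_mul_of_nonneg_right _ (by linarith)
          have := mul_le_mul_of_nonneg_left hexp_le (by norm_num : (0:ℝ) ≤ 32)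
          linarith
        linarith
    _ ≤ (8 + 8 * (Real.pi / c) ^ p) * (I₀ + I₁ + M₀ ^ 2 + M₁ ^ 2) * t ^ (-(N:ℝ)/2) := by
        rw [hpow]
        nlinarith [mul_nonneg (mul_nonneg hpicp htneg.le) (add_nonneg hI₀ hI₁),
          mul_nonneg htneg.le (add_nonneg (mul_self_nonneg M₀) (mul_self_nonneg M₁)),
          mul_nonneg htneg.le hI₀, mul_nonneg htneg.le hI₁,
          mul_nonneg htneg.le (sq_nonneg M₀), mul_nonneg htneg.le (sq_nonneg M₁),
          mul_nonneg (mul_nonneg hpicp htneg.le) (sq_nonneg M₀),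
          mul_nonneg (mul_nonneg hpicp htneg.le) (sq_nonneg M₁)]
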